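/- With the block decomposition Pᵀ(A+μB)P = diag((λ₁+μ)B₁,…,(λ_k+μ)B_k), λ₁ > … > λ_k, if B₁,…,B_{t-1} ≻ 0, B_t is indefinite, and B_{t+1},…,B_k ≺ 0, then {μ ∈ ℝ : A + μB ⪰ 0} = {-λ_t}. -/

import Mathlib

open Matrix

theorem bd_mulVec {k : ℕ} {m : Fin (k+1) → ℕ} (M : ∀ i, Matrix (Fin (m i)) (Fin (m i)) ℝ)
    (y : ((i : Fin (k+1)) × Fin (m i)) → ℝ) (i : Fin (k+1)) (j : Fin (m i)) :
    (Matrix.blockDiagonal' M *ᵥ y) ⟨i,j⟩ = (M i *ᵥ fun j' => y ⟨i,j'⟩) j := by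
  simp only [mulVec, dotProduct, ← Finset.univ_sigma_univ, Finset.sum_sigma]
  rw [Fintype.sum_eq_single i]
  · exact Finset.sum_congr rfl fun j' _ => by rw [blockDiagonal'_apply_eq]
  · intro i' hi'
    exact Finset.sum_eq_zero fun j' _ => by
      rw [blockDiagonal'_apply_ne _ _ _ (Ne.symm hi'), zero_mul]

theorem bd_quad {k : ℕ} {m : Fin (k+1) → ℕ} (M : ∀ i, Matrix (Fin (m i)) (Fin (m i)) ℝ)
    (y : ((i : Fin (k+1)) × Fin (m i)) → ℝ) :
    y ⬝ᵥ (Matrix.blockDiagonal' M *ᵥ y)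
      = ∑ i, (fun j => y ⟨i,j⟩) ⬝ᵥ (M i *ᵥ fun j => y ⟨i,j⟩) := by
  simp only [dotProduct, ← Finset.univ_sigma_univ, Finset.sum_sigma]
  exact Finset.sum_congr rfl fun i _ => Finset.sum_congr rfl fun j _ => by rw [bd_mulVec]

theorem quad_smul {n : ℕ} (c : ℝ) (M : Matrix (Fin n) (Fin n) ℝ) (x : Fin n → ℝ) :
    x ⬝ᵥ ((c • M) *ᵥ x) = c * (x ⬝ᵥ (M *ᵥ x)) := by
  rw [smul_mulVec, dotProduct_smul, smul_eq_mul]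

theorem psd_interval_singleton_of_indefinite_block {k : ℕ} {m : Fin (k + 1) → ℕ}
    (A B P : Matrix ((i : Fin (k + 1)) × Fin (m i)) ((i : Fin (k + 1)) × Fin (m i)) ℝ)
    (hA : A.IsSymm) (hB : B.IsSymm) (hP : IsUnit P.det)
    (lam : Fin (k + 1) → ℝ) (hlam : StrictAnti lam)
    (Bb : ∀ i, Matrix (Fin (m i)) (Fin (m i)) ℝ)
    (hBbsymm : ∀ i, (Bb i).IsSymm) (hBbinv : ∀ i, IsUnit (Bb i).det)
    (hPB : Pᵀ * B * P = Matrix.blockDiagonal' Bb)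
    (hPA : Pᵀ * A * P = Matrix.blockDiagonal' (fun i => lam i • Bb i))
    (t : Fin (k + 1))
    (hpos : ∀ i, i < t → (Bb i).PosDef)
    (hindef : (∃ x, 0 < x ⬝ᵥ (Bb t *ᵥ x)) ∧ (∃ x, x ⬝ᵥ (Bb t *ᵥ x) < 0))
    (hneg : ∀ i, t < i → (-(Bb i)).PosDef) :
    {μ : ℝ | (A + μ • B).PosSemidef} = {-(lam t)} := by
  have key : ∀ μ : ℝ, Pᵀ * (A + μ • B) * P
      = Matrix.blockDiagonal' (fun i => (lam i + μ) • Bb i) := by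
    intro μ
    have e1 : Pᵀ * (A + μ • B) * P = Pᵀ * A * P + μ • (Pᵀ * B * P) := by
      rw [Matrix.mul_add, Matrix.add_mul, Matrix.mul_smul, Matrix.smul_mul]
    have e2 : ((fun i => lam i • Bb i) + μ • Bb) = fun i => (lam i + μ) • Bb i := by
      funext i
      show lam i • Bb i + μ • Bb i = (lam i + μ) • Bb i
      rw [add_smul]
    rw [e1, hPA, hPB, ← Matrix.blockDiagonal'_smul, ← Matrix.blockDiagonal'_add, e2]
  have hPt : IsUnit Pᵀ.det := by rwa [Matrix.det_transpose]
  have equiv : ∀ μ : ℝ, (A + μ • B).PosSemidef ↔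
      (Matrix.blockDiagonal' (fun i => (lam i + μ) • Bb i)).PosSemidef := by
    intro μ
    constructor
    · intro h
      rw [← key μ]
      have := h.conjTranspose_mul_mul_same P
      rwa [Matrix.conjTranspose_eq_transpose_of_trivial] at this
    · intro h
      have h2 := h.conjTranspose_mul_mul_same P⁻¹
      rw [Matrix.conjTranspose_eq_transpose_of_trivial, ← key μ,
        Matrix.transpose_nonsing_inv] at h2
      have e : Pᵀ⁻¹ * (Pᵀ * (A + μ • B) * P) * P⁻¹ = A + μ • B := by
        rw [Matrix.mul_assoc Pᵀ⁻¹, Matrix.mul_assoc (Pᵀ * (A + μ • B)),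
          Matrix.mul_nonsing_inv _ hP, Matrix.mul_one, ← Matrix.mul_assoc,
          Matrix.nonsing_inv_mul _ hPt, Matrix.one_mul]
      rwa [e] at h2
  ext μ
  simp only [Set.mem_setOf_eq, Set.mem_singleton_iff]
  constructor
  · intro h
    rw [equiv μ] at h
    have test : ∀ x : Fin (m t) → ℝ, 0 ≤ (lam t + μ) * (x ⬝ᵥ (Bb t *ᵥ x)) := by
      intro x
      set y : ((i : Fin (k + 1)) × Fin (m i)) → ℝ :=
        fun p => dite (p.1 = t) (fun h => x (Fin.cast (congrArg m h) p.2)) (fun _ => 0) with hy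
      have hyt : (fun j => y ⟨t, j⟩) = x := by funext j; simp [hy]
      have hq := h.dotProduct_mulVec_nonneg y
      simp only [star_trivial] at hq
      rw [bd_quad] at hq
      have hsum : ∑ i, (fun j => y ⟨i,j⟩) ⬝ᵥ (((lam i + μ) • Bb i) *ᵥ fun j => y ⟨i,j⟩)
          = (lam t + μ) * (x ⬝ᵥ (Bb t *ᵥ x)) := by
        rw [Finset.sum_eq_single t]
        · rw [hyt, quad_smul]
        · intro i _ hi
          have hz : (fun j => y ⟨i, j⟩) = (fun _ => (0:ℝ)) := by
            funext j; simp [hy, hi]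
          rw [hz]
          exact zero_dotProduct _
        · intro h; exact absurd (Finset.mem_univ t) h
      rw [hsum] at hq
      exact hq
    obtain ⟨⟨xp, hxp⟩, ⟨xn, hxn⟩⟩ := hindef
    have h1 : 0 ≤ lam t + μ := by nlinarith [test xp]
    have h2 : lam t + μ ≤ 0 := by nlinarith [test xn]
    linarith
  · intro h
    subst h
    rw [equiv]
    refine Matrix.PosSemidef.of_dotProduct_mulVec_nonneg ?_ ?_
    · rw [Matrix.IsHermitian, Matrix.conjTranspose_eq_transpose_of_trivial,
        Matrix.blockDiagonal'_transpose]
      have e : (fun i => ((lam i + -lam t) • Bb i)ᵀ) = fun i => (lam i + -lam t) • Bb i := by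
        funext i
        rw [Matrix.transpose_smul, (hBbsymm i).eq]
      rw [e]
    · intro y
      simp only [star_trivial]
      rw [bd_quad]
      apply Finset.sum_nonneg
      intro i _
      rw [quad_smul]
      rcases lt_trichotomy i t with hi | hi | hi
      · have hc : 0 ≤ lam i + -lam t := by have := hlam hi; linarith
        have hq := (hpos i hi).posSemidef.dotProduct_mulVec_nonneg (fun j => y ⟨i,j⟩)
        simp only [star_trivial] at hq
        exact mul_nonneg hc hq
      · subst hi; simp
      · have hc : lam i + -lam t ≤ 0 := by have := hlam hi; linarith
        have hq := (hneg i hi).posSemidef.dotProduct_mulVec_nonneg (fun j => y ⟨i,j⟩)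
        simp only [star_trivial, neg_mulVec, dotProduct_neg] at hq
        nlinarith
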